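/- Let E = (f₁,…,f_k, g₁,…,g_p) be a (k+p)-uple of pairwise commuting holomorphic self-maps of 𝔹^q; set F := (f₁,…,f_k) and G := (g₁,…,g_p). Let (𝔹^d, h, Φ) be a canonical Kobayashi hyperbolic semi-model for F, let H := (Γ_F(g₁),…,Γ_F(g_p)) (a p-uple of pairwise commuting holomorphic self-maps of 𝔹^d), let (𝔹^e, r, Θ) be a canonical Kobayashi hyperbolic semi-model for H, and let Ξ := (Γ_H(φ₁),…,Γ_H(φ_k)) (a k-uple of commuting automorphisms of 𝔹^e). Then the triple (𝔹^e, r ∘ h, (Ξ, Θ)) is a canonical Kobayashi hyperbolic semi-model for E. -/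

import Mathlib

open Set Filter

noncomputable section

/-- `E q` is `ℂ^q` as a Euclidean (Hermitian) space. -/
abbrev E (q : ℕ) : Type := EuclideanSpace ℂ (Fin q)

/-- The open unit ball `𝔹^q ⊂ ℂ^q`. -/
def B (q : ℕ) : Set (E q) := Metric.ball 0 1

/-- A holomorphic map from `𝔹^q` to `𝔹^d`: it maps the ball into the ball and is
complex differentiable on the ball. -/
def HolMap (q d : ℕ) (f : E q → E d) : Prop :=
  Set.MapsTo f (B q) (B d) ∧ DifferentiableOn ℂ f (B q)

/-- An automorphism of `𝔹^d`: a holomorphic self-map with a holomorphic inverse on the ball. -/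
def IsAut (d : ℕ) (τ : E d → E d) : Prop :=
  HolMap d d τ ∧ ∃ σ : E d → E d, HolMap d d σ ∧
    Set.EqOn (σ ∘ τ) id (B d) ∧ Set.EqOn (τ ∘ σ) id (B d)

/-- `iterT f N = f₁^{n₁} ∘ ⋯ ∘ f_k^{n_k}` for a `k`-uple `f` and a multi-index `N ∈ ℕ^k`. -/
def iterT {α : Type} {k : ℕ} (f : Fin k → α → α) (N : Fin k → ℕ) : α → α :=
  (List.ofFn fun j => (f j)^[N j]).foldr (· ∘ ·) id

/-- Pairwise commutation (on the ball) of a `k`-uple of self-maps. -/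
def CommutingOn (q k : ℕ) (f : Fin k → E q → E q) : Prop :=
  ∀ i j, Set.EqOn (f i ∘ f j) (f j ∘ f i) (B q)

/-- A quasi-model with ball base for the `k`-uple `f`. -/
def IsQuasiModel (q d k : ℕ) (f : Fin k → E q → E q) (ℓ : E q → E d)
    (τ : Fin k → E d → E d) : Prop :=
  HolMap q d ℓ ∧ (∀ j, IsAut d (τ j)) ∧
    (∀ i j, Set.EqOn (τ i ∘ τ j) (τ j ∘ τ i) (B d)) ∧
    (∀ j, Set.EqOn (ℓ ∘ f j) (τ j ∘ ℓ) (B q))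

/-- A semi-model with ball base: a quasi-model with `⋃_{N ∈ ℕ^k} T^{-N}(ℓ(𝔹^q)) = 𝔹^d`,
where `T^{-N}(S)` is expressed as `{y ∈ 𝔹^d | T^N y ∈ S}`. -/
def IsSemiModel (q d k : ℕ) (f : Fin k → E q → E q) (ℓ : E q → E d)
    (τ : Fin k → E d → E d) : Prop :=
  IsQuasiModel q d k f ℓ τ ∧
    (⋃ N : Fin k → ℕ, B d ∩ (iterT τ N) ⁻¹' (ℓ '' B q)) = B d

/-- A canonical Kobayashi hyperbolic semi-model (CSM) with ball base: a semi-model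
through which every quasi-model with ball base (necessarily uniquely) factorizes. -/
def IsCSM (q d k : ℕ) (f : Fin k → E q → E q) (ℓ : E q → E d)
    (τ : Fin k → E d → E d) : Prop :=
  IsSemiModel q d k f ℓ τ ∧
    ∀ (m : ℕ) (h : E q → E m) (φ : Fin k → E m → E m),
      IsQuasiModel q m k f h φ →
      ∃ η : E d → E m, HolMap d m η ∧ Set.EqOn (η ∘ ℓ) h (B q) ∧
        ∀ j, Set.EqOn (η ∘ τ j) (φ j ∘ η) (B d)

/-- Inverse hyperbolic tangent. -/
def arctanh (t : ℝ) : ℝ := Real.log ((1 + t) / (1 - t)) / 2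

/-- The Kobayashi distance of the unit ball `𝔹^q`:
`k_{𝔹^q}(z,w) = arctanh √(1 − (1−‖z‖²)(1−‖w‖²)/|1−⟨z,w⟩|²)`. -/
def kob (q : ℕ) (z w : E q) : ℝ :=
  arctanh (Real.sqrt (1 - ((1 - ‖z‖ ^ 2) * (1 - ‖w‖ ^ 2)) /
    ‖(1 - (inner ℂ z w : ℂ))‖ ^ 2))

/-- The Kobayashi ball of center `p` and radius `r` in `𝔹^q`. -/
def Bk (q : ℕ) (p : E q) (r : ℝ) : Set (E q) := {z ∈ B q | kob q z p < r}

/-- `p ∈ ∂𝔹^q` is the Denjoy–Wolff point of `f`: the iterates of `f` converge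
locally uniformly on `𝔹^q` to the constant `p`. -/
def IsDW (q : ℕ) (f : E q → E q) (p : E q) : Prop :=
  ‖p‖ = 1 ∧
    TendstoLocallyUniformlyOn (fun n z => f^[n] z) (fun _ => p) Filter.atTop (B q)

/-- The dilation `λ = liminf_{z→p} (1−‖f(z)‖)/(1−‖z‖)` of `f` at a boundary point `p`. -/
def dilation (q : ℕ) (f : E q → E q) (p : E q) : ℝ :=
  Filter.liminf (fun z => (1 - ‖f z‖) / (1 - ‖z‖)) (nhdsWithin p (B q))

/-- The rank of the complex differential of `f` at `y`. -/
def rankAt (q d : ℕ) (f : E q → E d) (y : E q) : ℕ :=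
  Module.finrank ℂ (LinearMap.range (fderiv ℂ f y).toLinearMap)

/-- A quasi-model with ball base for a single self-map `f`. -/
def IsQuasiModel1 (q d : ℕ) (f : E q → E q) (ℓ : E q → E d) (τ : E d → E d) : Prop :=
  HolMap q d ℓ ∧ IsAut d τ ∧ Set.EqOn (ℓ ∘ f) (τ ∘ ℓ) (B q)

/-- A semi-model with ball base for a single self-map `f`. -/
def IsSemiModel1 (q d : ℕ) (f : E q → E q) (ℓ : E q → E d) (τ : E d → E d) : Prop :=
  IsQuasiModel1 q d f ℓ τ ∧ (⋃ n : ℕ, B d ∩ τ^[n] ⁻¹' (ℓ '' B q)) = B d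

/-- A canonical Kobayashi hyperbolic semi-model with ball base for a single self-map `f`. -/
def IsCSM1 (q d : ℕ) (f : E q → E q) (ℓ : E q → E d) (τ : E d → E d) : Prop :=
  IsSemiModel1 q d f ℓ τ ∧
    ∀ (m : ℕ) (h : E q → E m) (φ : E m → E m), IsQuasiModel1 q m f h φ →
      ∃ η : E d → E m, HolMap d m η ∧ Set.EqOn (η ∘ ℓ) h (B q) ∧
        Set.EqOn (η ∘ τ) (φ ∘ η) (B d)

section Helpers

variable {α β : Type}

lemma foldr_comp_append (L₁ L₂ : List (α → α)) :
    (L₁ ++ L₂).foldr (· ∘ ·) id = L₁.foldr (· ∘ ·) id ∘ L₂.foldr (· ∘ ·) id := by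
  induction L₁ with
  | nil => rfl
  | cons a L ih => simp [List.foldr_cons, ih, Function.comp_assoc]

lemma iterT_zero (f : Fin 0 → α → α) (N : Fin 0 → ℕ) : iterT f N = id := rfl

lemma iterT_succ {k : ℕ} (f : Fin (k+1) → α → α) (N : Fin (k+1) → ℕ) :
    iterT f N = (f 0)^[N 0] ∘ iterT (fun i => f i.succ) (fun i => N i.succ) := by
  unfold iterT
  rw [List.ofFn_succ]
  rfl

lemma iterT_append {k p : ℕ} (f : Fin k → α → α) (g : Fin p → α → α)
    (M : Fin k → ℕ) (P : Fin p → ℕ) :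
    iterT (Fin.append f g) (Fin.append M P) = iterT f M ∘ iterT g P := by
  unfold iterT
  rw [show (List.ofFn fun j : Fin (k+p) => (Fin.append f g j)^[Fin.append M P j])
      = (List.ofFn fun j : Fin k => (f j)^[M j]) ++ (List.ofFn fun j : Fin p => (g j)^[P j]) by
    rw [List.ofFn_add]; simp only [show ∀ i : Fin k, Fin.castLE (Nat.le_add_right k p) i = Fin.castAdd p i from fun i => rfl, Fin.append_left, Fin.append_right]]
  exact foldr_comp_append _ _

lemma mapsTo_iterT {S : Set α} :
    ∀ {k : ℕ} (f : Fin k → α → α), (∀ j, Set.MapsTo (f j) S S) →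
      ∀ N : Fin k → ℕ, Set.MapsTo (iterT f N) S S := by
  intro k
  induction k with
  | zero => intro f _ N; rw [iterT_zero]; exact Set.mapsTo_id S
  | succ k ih =>
    intro f hf N
    rw [iterT_succ]
    exact ((hf 0).iterate (N 0)).comp (ih (fun j => f j.succ) (fun j => hf j.succ) (fun i => N i.succ))

lemma iterate_semiconjOn {S : Set α} {g : α → α} {δ : α → β} {ψ : β → β}
    (hg : Set.MapsTo g S S) (h : ∀ x ∈ S, δ (g x) = ψ (δ x)) :
    ∀ n, ∀ x ∈ S, δ (g^[n] x) = ψ^[n] (δ x) := by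
  intro n
  induction n with
  | zero => intro x _; rfl
  | succ n ih =>
    intro x hx
    rw [Function.iterate_succ_apply', Function.iterate_succ_apply',
      h _ (hg.iterate n hx), ih x hx]

lemma iterT_semiconjOn {S : Set α} {δ : α → β} :
    ∀ {k : ℕ} (f : Fin k → α → α) (g : Fin k → β → β),
      (∀ j, Set.MapsTo (f j) S S) →
      (∀ j, ∀ x ∈ S, δ (f j x) = g j (δ x)) →
      ∀ N : Fin k → ℕ, ∀ x ∈ S, δ (iterT f N x) = iterT g N (δ x) := by
  intro k
  induction k with
  | zero => intro f g _ _ N x _; rw [iterT_zero, iterT_zero]; rfl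
  | succ k ih =>
    intro f g hf hsc N x hx
    rw [iterT_succ, iterT_succ]
    simp only [Function.comp_apply]
    rw [iterate_semiconjOn (hf 0) (hsc 0) (N 0) _
        (mapsTo_iterT (fun j => f j.succ) (fun j => hf j.succ) (fun i => N i.succ) hx),
      ih _ _ (fun j => hf j.succ) (fun j => hsc j.succ) _ x hx]

lemma iterate_injOn {S : Set α} {g : α → α} (hg : Set.MapsTo g S S)
    (hinj : Set.InjOn g S) : ∀ n, Set.InjOn g^[n] S := by
  intro n
  induction n with
  | zero => exact fun x _ y _ hxy => hxy
  | succ n ih =>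
    intro x hx y hy hxy
    rw [Function.iterate_succ_apply', Function.iterate_succ_apply'] at hxy
    exact ih hx hy (hinj (hg.iterate n hx) (hg.iterate n hy) hxy)

lemma iterT_injOn {S : Set β} :
    ∀ {k : ℕ} (g : Fin k → β → β), (∀ j, Set.MapsTo (g j) S S) →
      (∀ j, Set.InjOn (g j) S) → ∀ N : Fin k → ℕ, Set.InjOn (iterT g N) S := by
  intro k
  induction k with
  | zero => intro g _ _ N x _ y _ hxy; exact hxy
  | succ k ih =>
    intro g hg hinj N x hx y hy hxy
    rw [iterT_succ] at hxy
    simp only [Function.comp_apply] at hxy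
    have hm := mapsTo_iterT (fun j => g j.succ) (fun j => (hg j.succ)) (fun i => N i.succ)
    exact ih (fun j => g j.succ) (fun j => hg j.succ) (fun j => hinj j.succ) _
      hx hy (iterate_injOn (hg 0) (hinj 0) (N 0) (hm hx) (hm hy) hxy)

lemma IsAut.mapsTo {d : ℕ} {τ : E d → E d} (h : IsAut d τ) :
    Set.MapsTo τ (B d) (B d) := h.1.1

lemma IsAut.injOn {d : ℕ} {τ : E d → E d} (h : IsAut d τ) : Set.InjOn τ (B d) := by
  obtain ⟨_, σ, _, hστ, _⟩ := h
  intro x hx y hy hxy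
  have h1 := hστ hx
  have h2 := hστ hy
  simp only [Function.comp_apply, id_eq] at h1 h2
  rw [← h1, ← h2, hxy]

lemma HolMap.comp {q d e : ℕ} {r : E d → E e} {h' : E q → E d}
    (hr : HolMap d e r) (hh : HolMap q d h') : HolMap q e (r ∘ h') :=
  ⟨hr.1.comp hh.1, hr.2.comp hh.2 hh.1⟩

/-- Uniqueness of equivariant maps out of a semi-model. -/
lemma uniq_on_semimodel {q d m k : ℕ} {f : Fin k → E q → E q} {ℓ : E q → E d}
    {τ : Fin k → E d → E d} (hsm : IsSemiModel q d k f ℓ τ)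
    {ψ : Fin k → E m → E m} (hψ : ∀ j, IsAut m (ψ j))
    {δ₁ δ₂ : E d → E m} (h₁ : Set.MapsTo δ₁ (B d) (B m))
    (h₂ : Set.MapsTo δ₂ (B d) (B m))
    (hbase : ∀ z ∈ B q, δ₁ (ℓ z) = δ₂ (ℓ z))
    (hsc₁ : ∀ j, ∀ x ∈ B d, δ₁ (τ j x) = ψ j (δ₁ x))
    (hsc₂ : ∀ j, ∀ x ∈ B d, δ₂ (τ j x) = ψ j (δ₂ x)) :
    Set.EqOn δ₁ δ₂ (B d) := by
  intro x hx
  have hx' : x ∈ ⋃ N : Fin k → ℕ, B d ∩ (iterT τ N) ⁻¹' (ℓ '' B q) := by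
    rw [hsm.2]; exact hx
  obtain ⟨N, hN⟩ := Set.mem_iUnion.mp hx'
  obtain ⟨z, hz, hzeq⟩ := hN.2
  have hτm : ∀ j, Set.MapsTo (τ j) (B d) (B d) := fun j => (hsm.1.2.1 j).mapsTo
  have e1 : δ₁ (iterT τ N x) = iterT ψ N (δ₁ x) := iterT_semiconjOn τ ψ hτm hsc₁ N x hx
  have e2 : δ₂ (iterT τ N x) = iterT ψ N (δ₂ x) := iterT_semiconjOn τ ψ hτm hsc₂ N x hx
  have : iterT ψ N (δ₁ x) = iterT ψ N (δ₂ x) := by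
    rw [← e1, ← e2, ← hzeq, hbase z hz]
  exact iterT_injOn ψ (fun j => (hψ j).mapsTo) (fun j => (hψ j).injOn) N
    (h₁ hx) (h₂ hx) this

end Helpers
/-- composition of canonical semi-models. If `(𝔹^d, h, Φ)` is a CSM for
`F = (f₁,…,f_k)`, `H = (Γ_F(g₁),…,Γ_F(g_p))`, `(𝔹^e, r, Θ)` is a CSM for `H` and
`Ξ = (Γ_H(φ₁),…,Γ_H(φ_k))`, then `(𝔹^e, r ∘ h, (Ξ, Θ))` is a CSM for
`E = (f₁,…,f_k,g₁,…,g_p)`. -/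
theorem CSM_composition (q k p d e : ℕ) (Em : Fin (k + p) → E q → E q)
    (hEm : ∀ j, HolMap q q (Em j)) (hcommE : CommutingOn q (k + p) Em)
    (F : Fin k → E q → E q) (G : Fin p → E q → E q)
    (hFdef : ∀ j, F j = Em (Fin.castAdd p j)) (hGdef : ∀ i, G i = Em (Fin.natAdd k i))
    (h : E q → E d) (Φ : Fin k → E d → E d) (hFcsm : IsCSM q d k F h Φ)
    (H : Fin p → E d → E d)
    (hH : ∀ i, HolMap d d (H i) ∧ Set.EqOn (H i ∘ h) (h ∘ G i) (B q) ∧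
      ∀ j, Set.EqOn (H i ∘ Φ j) (Φ j ∘ H i) (B d))
    (hHcomm : CommutingOn d p H)
    (r : E d → E e) (Θ : Fin p → E e → E e) (hHcsm : IsCSM d e p H r Θ)
    (Ξ : Fin k → E e → E e)
    (hΞ : ∀ j, HolMap e e (Ξ j) ∧ Set.EqOn (Ξ j ∘ r) (r ∘ Φ j) (B d) ∧
      ∀ i, Set.EqOn (Ξ j ∘ Θ i) (Θ i ∘ Ξ j) (B e)) :
    IsCSM q e (k + p) Em (r ∘ h) (Fin.append Ξ Θ) := by
  have smF := hFcsm.1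
  have smH := hHcsm.1
  obtain ⟨⟨⟨hol_h, Φaut, Φcomm, hFsc⟩, unionF⟩, univF⟩ := hFcsm
  obtain ⟨⟨⟨hol_r, Θaut, Θcomm, hHsc⟩, unionH⟩, univH⟩ := hHcsm
  -- basic maps-to facts
  have hhm : Set.MapsTo h (B q) (B d) := hol_h.1
  have hrm : Set.MapsTo r (B d) (B e) := hol_r.1
  have hΦm : ∀ j, Set.MapsTo (Φ j) (B d) (B d) := fun j => (Φaut j).mapsTo
  have hΘm : ∀ i, Set.MapsTo (Θ i) (B e) (B e) := fun i => (Θaut i).mapsTo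
  have hHm : ∀ i, Set.MapsTo (H i) (B d) (B d) := fun i => (hH i).1.1
  have hΞm : ∀ j, Set.MapsTo (Ξ j) (B e) (B e) := fun j => (hΞ j).1.1
  have hGm : ∀ i, Set.MapsTo (G i) (B q) (B q) := fun i => by
    rw [hGdef]; exact (hEm _).1
  -- pointwise versions of the equivariance hypotheses
  have hFsc' : ∀ j, ∀ z ∈ B q, h (F j z) = Φ j (h z) := fun j z hz => hFsc j hz
  have hHsc' : ∀ i, ∀ x ∈ B d, r (H i x) = Θ i (r x) := fun i x hx => hHsc i hx
  have hHh : ∀ i, ∀ z ∈ B q, H i (h z) = h (G i z) := fun i z hz => (hH i).2.1 hz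
  have hHΦ : ∀ i j, ∀ x ∈ B d, H i (Φ j x) = Φ j (H i x) :=
    fun i j x hx => (hH i).2.2 j hx
  have hΞr : ∀ j, ∀ x ∈ B d, Ξ j (r x) = r (Φ j x) := fun j x hx => (hΞ j).2.1 hx
  have hΞΘ : ∀ j i, ∀ y ∈ B e, Ξ j (Θ i y) = Θ i (Ξ j y) :=
    fun j i y hy => (hΞ j).2.2 i hy
  have hΦc : ∀ a b, ∀ x ∈ B d, Φ a (Φ b x) = Φ b (Φ a x) :=
    fun a b x hx => Φcomm a b hx
  -- Step A : each Ξ j is an automorphism of B e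
  have XiAut : ∀ j : Fin k, IsAut e (Ξ j) := by
    intro j
    obtain ⟨hΦholj, σ, hσhol, hσΦ, hΦσ⟩ := Φaut j
    have hσm : Set.MapsTo σ (B d) (B d) := hσhol.1
    have hσΦ' : ∀ x ∈ B d, σ (Φ j x) = x := fun x hx => hσΦ hx
    have hΦσ' : ∀ x ∈ B d, Φ j (σ x) = x := fun x hx => hΦσ hx
    have hσH : ∀ i, ∀ x ∈ B d, σ (H i x) = H i (σ x) := by
      intro i x hx
      have hy : σ x ∈ B d := hσm hx
      have h2 : H i (Φ j (σ x)) = Φ j (H i (σ x)) := hHΦ i j _ hy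
      rw [hΦσ' x hx] at h2
      rw [h2, hσΦ' _ (hHm i hy)]
    have hq : IsQuasiModel d e p H (r ∘ σ) Θ := by
      refine ⟨hol_r.comp hσhol, Θaut, Θcomm, fun i x hx => ?_⟩
      show r (σ (H i x)) = Θ i (r (σ x))
      rw [hσH i x hx, hHsc' i _ (hσm hx)]
    obtain ⟨η, hηhol, hηr, hηΘ⟩ := univH e (r ∘ σ) Θ hq
    have hηm : Set.MapsTo η (B e) (B e) := hηhol.1
    have hηr' : ∀ x ∈ B d, η (r x) = r (σ x) := fun x hx => hηr hx
    have hηΘ' : ∀ i, ∀ y ∈ B e, η (Θ i y) = Θ i (η y) := fun i y hy => hηΘ i hy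
    have left : Set.EqOn (η ∘ Ξ j) id (B e) := by
      refine uniq_on_semimodel smH Θaut (hηm.comp (hΞm j)) (Set.mapsTo_id _)
        ?_ ?_ (fun i y hy => rfl)
      · intro x hx
        show η (Ξ j (r x)) = r x
        rw [hΞr j x hx, hηr' _ (hΦm j hx), hσΦ' x hx]
      · intro i y hy
        show η (Ξ j (Θ i y)) = Θ i (η (Ξ j y))
        rw [hΞΘ j i y hy, hηΘ' i _ (hΞm j hy)]
    have right : Set.EqOn (Ξ j ∘ η) id (B e) := by
      refine uniq_on_semimodel smH Θaut ((hΞm j).comp hηm) (Set.mapsTo_id _)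
        ?_ ?_ (fun i y hy => rfl)
      · intro x hx
        show Ξ j (η (r x)) = r x
        rw [hηr' x hx, hΞr j _ (hσm hx), hΦσ' x hx]
      · intro i y hy
        show Ξ j (η (Θ i y)) = Θ i (Ξ j (η y))
        rw [hηΘ' i y hy, hΞΘ j i _ (hηm hy)]
    exact ⟨(hΞ j).1, η, hηhol, left, right⟩
  -- Step B : commutation of the appended family
  have ΞΞcomm : ∀ a b : Fin k, Set.EqOn (Ξ a ∘ Ξ b) (Ξ b ∘ Ξ a) (B e) := by
    intro a b
    refine uniq_on_semimodel smH Θaut ((hΞm a).comp (hΞm b)) ((hΞm b).comp (hΞm a))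
      ?_ ?_ ?_
    · intro x hx
      show Ξ a (Ξ b (r x)) = Ξ b (Ξ a (r x))
      rw [hΞr b x hx, hΞr a _ (hΦm b hx), hΞr a x hx, hΞr b _ (hΦm a hx),
        hΦc a b x hx]
    · intro i y hy
      show Ξ a (Ξ b (Θ i y)) = Θ i (Ξ a (Ξ b y))
      rw [hΞΘ b i y hy, hΞΘ a i _ (hΞm b hy)]
    · intro i y hy
      show Ξ b (Ξ a (Θ i y)) = Θ i (Ξ b (Ξ a y))
      rw [hΞΘ a i y hy, hΞΘ b i _ (hΞm a hy)]
  have Tcomm : ∀ a b : Fin (k + p),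
      Set.EqOn (Fin.append Ξ Θ a ∘ Fin.append Ξ Θ b)
        (Fin.append Ξ Θ b ∘ Fin.append Ξ Θ a) (B e) := by
    intro a b
    cases a using Fin.addCases with
    | left a =>
      cases b using Fin.addCases with
      | left b => simp only [Fin.append_left]; exact ΞΞcomm a b
      | right b => simp only [Fin.append_left, Fin.append_right]; exact (hΞ a).2.2 b
    | right a =>
      cases b using Fin.addCases with
      | left b =>
        simp only [Fin.append_left, Fin.append_right]
        exact fun y hy => ((hΞ b).2.2 a hy).symm
      | right b => simp only [Fin.append_right]; exact Θcomm a b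
  -- Step C : equivariance of r ∘ h
  have Tsc : ∀ j, Set.EqOn ((r ∘ h) ∘ Em j) (Fin.append Ξ Θ j ∘ (r ∘ h)) (B q) := by
    intro j
    cases j using Fin.addCases with
    | left j =>
      intro z hz
      show r (h (Em (Fin.castAdd p j) z)) = Fin.append Ξ Θ (Fin.castAdd p j) (r (h z))
      rw [Fin.append_left, ← hFdef, hFsc' j z hz, ← hΞr j _ (hhm hz)]
    | right i =>
      intro z hz
      show r (h (Em (Fin.natAdd k i) z)) = Fin.append Ξ Θ (Fin.natAdd k i) (r (h z))
      rw [Fin.append_right, ← hGdef, ← hHh i z hz, hHsc' i _ (hhm hz)]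
  -- Step D : the union condition
  have union : (⋃ N : Fin (k + p) → ℕ,
      B e ∩ (iterT (Fin.append Ξ Θ) N) ⁻¹' ((r ∘ h) '' B q)) = B e := by
    refine Set.Subset.antisymm (Set.iUnion_subset fun N => Set.inter_subset_left) ?_
    intro y hy
    have hy' : y ∈ ⋃ P : Fin p → ℕ, B e ∩ iterT Θ P ⁻¹' (r '' B d) := by
      rw [unionH]; exact hy
    obtain ⟨P, hyP⟩ := Set.mem_iUnion.mp hy'
    obtain ⟨x, hx, hxr⟩ := hyP.2
    have hx' : x ∈ ⋃ M : Fin k → ℕ, B d ∩ iterT Φ M ⁻¹' (h '' B q) := by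
      rw [unionF]; exact hx
    obtain ⟨M, hxM⟩ := Set.mem_iUnion.mp hx'
    obtain ⟨z, hz, hzh⟩ := hxM.2
    refine Set.mem_iUnion.mpr ⟨Fin.append M P, hy, ?_⟩
    show iterT (Fin.append Ξ Θ) (Fin.append M P) y ∈ (r ∘ h) '' B q
    rw [iterT_append]
    show iterT Ξ M (iterT Θ P y) ∈ (r ∘ h) '' B q
    have hrsc : r (iterT Φ M x) = iterT Ξ M (r x) :=
      iterT_semiconjOn Φ Ξ hΦm (fun j x hx => (hΞr j x hx).symm) M x hx
    rw [← hxr, ← hrsc, ← hzh]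
    exact ⟨z, hz, rfl⟩
  -- assemble the semi-model
  refine ⟨⟨⟨hol_r.comp hol_h, ?_, Tcomm, Tsc⟩, union⟩, ?_⟩
  · intro j
    cases j using Fin.addCases with
    | left j => simp only [Fin.append_left]; exact XiAut j
    | right i => simp only [Fin.append_right]; exact Θaut i
  -- Step E : universal property
  intro m l ψ hqm
  obtain ⟨hol_l, ψaut, ψcomm, hlsc⟩ := hqm
  have hlm : Set.MapsTo l (B q) (B m) := hol_l.1
  have hψm : ∀ j, Set.MapsTo (ψ j) (B m) (B m) := fun j => (ψaut j).mapsTo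
  have hlsc' : ∀ j, ∀ z ∈ B q, l (Em j z) = ψ j (l z) := fun j z hz => hlsc j hz
  have hqF : IsQuasiModel q m k F l (fun j => ψ (Fin.castAdd p j)) := by
    refine ⟨hol_l, fun j => ψaut _, fun a b => ψcomm _ _, fun j z hz => ?_⟩
    show l (F j z) = ψ (Fin.castAdd p j) (l z)
    rw [hFdef, hlsc' _ z hz]
  obtain ⟨α, hαhol, hαh, hαΦ⟩ := univF m l _ hqF
  have hαm : Set.MapsTo α (B d) (B m) := hαhol.1
  have hαh' : ∀ z ∈ B q, α (h z) = l z := fun z hz => hαh hz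
  have hαΦ' : ∀ j, ∀ x ∈ B d, α (Φ j x) = ψ (Fin.castAdd p j) (α x) :=
    fun j x hx => hαΦ j hx
  have hαH : ∀ i, ∀ x ∈ B d, α (H i x) = ψ (Fin.natAdd k i) (α x) := by
    intro i
    have key : Set.EqOn (α ∘ H i) (ψ (Fin.natAdd k i) ∘ α) (B d) := by
      refine uniq_on_semimodel smF (fun j => ψaut (Fin.castAdd p j))
        (hαm.comp (hHm i)) ((hψm _).comp hαm) ?_ ?_ ?_
      · intro z hz
        show α (H i (h z)) = ψ (Fin.natAdd k i) (α (h z))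
        rw [hHh i z hz, hαh' _ (hGm i hz), hαh' z hz, hGdef, hlsc' _ z hz]
      · intro j x hx
        show α (H i (Φ j x)) = ψ (Fin.castAdd p j) (α (H i x))
        rw [hHΦ i j x hx, hαΦ' j _ (hHm i hx)]
      · intro j x hx
        show ψ (Fin.natAdd k i) (α (Φ j x)) =
          ψ (Fin.castAdd p j) (ψ (Fin.natAdd k i) (α x))
        rw [hαΦ' j x hx]
        exact ψcomm (Fin.natAdd k i) (Fin.castAdd p j) (hαm hx)
    exact fun x hx => key hx
  have hqH : IsQuasiModel d m p H α (fun i => ψ (Fin.natAdd k i)) :=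
    ⟨hαhol, fun i => ψaut _, fun a b => ψcomm _ _, fun i x hx => hαH i x hx⟩
  obtain ⟨η, hηhol, hηr, hηΘ⟩ := univH m α _ hqH
  have hηm : Set.MapsTo η (B e) (B m) := hηhol.1
  have hηr' : ∀ x ∈ B d, η (r x) = α x := fun x hx => hηr hx
  have hηΘ' : ∀ i, ∀ y ∈ B e, η (Θ i y) = ψ (Fin.natAdd k i) (η y) :=
    fun i y hy => hηΘ i hy
  refine ⟨η, hηhol, fun z hz => ?_, ?_⟩
  · show η (r (h z)) = l z
    rw [hηr' _ (hhm hz), hαh' z hz]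
  · intro j
    cases j using Fin.addCases with
    | right i =>
      intro y hy
      show η (Fin.append Ξ Θ (Fin.natAdd k i) y) = ψ (Fin.natAdd k i) (η y)
      rw [Fin.append_right, hηΘ' i y hy]
    | left j =>
      have key : Set.EqOn (η ∘ Ξ j) (ψ (Fin.castAdd p j) ∘ η) (B e) := by
        refine uniq_on_semimodel smH (fun i => ψaut (Fin.natAdd k i))
          (hηm.comp (hΞm j)) ((hψm _).comp hηm) ?_ ?_ ?_
        · intro x hx
          show η (Ξ j (r x)) = ψ (Fin.castAdd p j) (η (r x))
          rw [hΞr j x hx, hηr' _ (hΦm j hx), hαΦ' j x hx, hηr' x hx]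
        · intro i y hy
          show η (Ξ j (Θ i y)) = ψ (Fin.natAdd k i) (η (Ξ j y))
          rw [hΞΘ j i y hy, hηΘ' i _ (hΞm j hy)]
        · intro i y hy
          show ψ (Fin.castAdd p j) (η (Θ i y)) =
            ψ (Fin.natAdd k i) (ψ (Fin.castAdd p j) (η y))
          rw [hηΘ' i y hy]
          exact ψcomm (Fin.castAdd p j) (Fin.natAdd k i) (hηm hy)
      intro y hy
      show η (Fin.append Ξ Θ (Fin.castAdd p j) y) = ψ (Fin.castAdd p j) (η y)
      rw [Fin.append_left]
      exact key hy
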